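/- For n-bit integers x, y, α, β, γ, if for all x the identity (((x + α) mod 2^n) XOR β + γ) mod 2^n = x XOR y holds, then y ≡ β (mod 2^(n−1)). -/

import Mathlib

lemma testBit_add_mul {k a : ℕ} (b : ℕ) (ha : a < 2^k) (j : ℕ) :
    (a + b * 2^k).testBit j = if j < k then a.testBit j else b.testBit (j - k) := by
  rcases Nat.lt_or_ge j k with hj | hj
  · have h1 : (a + b * 2^k) % 2^k = a := by
      rw [Nat.add_mul_mod_self_right, Nat.mod_eq_of_lt ha]
    have h2 := Nat.testBit_mod_two_pow (a + b * 2^k) k j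
    rw [h1] at h2
    simp [h2, hj]
  · have h2 : (a + b * 2^k) / 2^j = b / 2^(j-k) := by
      have hp : (2:ℕ)^j = 2^k * 2^(j-k) := by rw [← pow_add]; congr 1; omega
      rw [hp, ← Nat.div_div_eq_div_mul, Nat.add_mul_div_right _ _ (Nat.two_pow_pos k),
        Nat.div_eq_of_lt ha, Nat.zero_add]
    rw [if_neg (by omega : ¬ j < k)]
    simp [Nat.testBit_eq_decide_div_mod_eq, h2]

lemma xor_split {q k a c : ℕ} (hq : q = 2^k) (b d : ℕ) (ha : a < q) (hc : c < q) :
    (a + b * q) ^^^ (c + d * q) = (a ^^^ c) + (b ^^^ d) * q := by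
  subst hq
  apply Nat.eq_of_testBit_eq
  intro j
  rw [Nat.testBit_xor, testBit_add_mul b ha, testBit_add_mul d hc,
    testBit_add_mul (b ^^^ d) (Nat.xor_lt_two_pow ha hc)]
  split <;> simp [Nat.testBit_xor]

lemma mod_split {q a : ℕ} (hqpos : 0 < q) (ha : a < q) (b : ℕ) :
    (a + b * q) % (4 * q) = a + (b % 4) * q := by
  have h1 : a + b * q = (a + (b % 4) * q) + (b / 4) * (4 * q) := by
    conv_lhs => rw [← Nat.mod_add_div b 4]
    ring
  rw [h1, Nat.add_mul_mod_self_right]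
  apply Nat.mod_eq_of_lt
  have h2 : (b % 4) * q ≤ 3 * q := Nat.mul_le_mul_right q (by omega)
  omega

lemma xor_mod_two_pow (a b k : ℕ) :
    (a ^^^ b) % 2^k = (a % 2^k) ^^^ (b % 2^k) := by
  apply Nat.eq_of_testBit_eq
  intro j
  simp only [Nat.testBit_mod_two_pow, Nat.testBit_xor]
  rcases Nat.lt_or_ge j k with hj | hj
  · simp [hj]
  · simp [Nat.not_lt.2 hj]

lemma trunc (n m : ℕ) (hmn : m ≤ n) (α β γ y : ℕ)
    (h : ∀ x : ℕ, x < 2^n → ((((x + α) % 2^n) ^^^ β) + γ) % 2^n = x ^^^ y) :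
    ∀ x : ℕ, x < 2^m →
      ((((x + α % 2^m) % 2^m) ^^^ β % 2^m) + γ % 2^m) % 2^m = x ^^^ (y % 2^m) := by
  intro x hx
  have hd : (2:ℕ)^m ∣ 2^n := pow_dvd_pow 2 hmn
  have h0 := h x (lt_of_lt_of_le hx (Nat.pow_le_pow_right (by norm_num) hmn))
  have h1 := congrArg (· % 2^m) h0
  calc ((((x + α % 2^m) % 2^m) ^^^ β % 2^m) + γ % 2^m) % 2^m
      = ((((x + α) % 2^m) ^^^ β % 2^m) + γ % 2^m) % 2^m := by rw [Nat.add_mod_mod x α (2^m)]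
    _ = ((((x + α) % 2^n % 2^m) ^^^ β % 2^m) + γ % 2^m) % 2^m := by
        rw [Nat.mod_mod_of_dvd _ hd]
    _ = (((((x + α) % 2^n) ^^^ β) % 2^m) + γ % 2^m) % 2^m := by
        rw [xor_mod_two_pow]
    _ = ((((x + α) % 2^n) ^^^ β) + γ) % 2^m := by rw [← Nat.add_mod]
    _ = ((((x + α) % 2^n) ^^^ β) + γ) % 2^n % 2^m := by rw [Nat.mod_mod_of_dvd _ hd]
    _ = (x ^^^ y) % 2^m := h1
    _ = (x % 2^m) ^^^ (y % 2^m) := xor_mod_two_pow x y m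
    _ = x ^^^ (y % 2^m) := by rw [Nat.mod_eq_of_lt hx]

lemma crux (m : ℕ) (hm : 2 ≤ m) (α β γ y : ℕ)
    (hα : α < 2^m) (hβ : β < 2^m) (hγ : γ < 2^m) (hy : y < 2^m)
    (h : ∀ x : ℕ, x < 2^m → ((((x + α) % 2^m) ^^^ β) + γ) % 2^m = x ^^^ y) :
    y / 2^(m-2) % 2 = β / 2^(m-2) % 2 := by
  set q := 2^(m-2) with hqdef
  have hq : 0 < q := Nat.two_pow_pos _
  have hN4 : (2:ℕ)^m = 4*q := by
    rw [hqdef, show (4:ℕ) = 2^2 from rfl, ← pow_add]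
    congr 1
    omega
  rw [hN4] at h hα hβ hγ hy
  -- first instantiation
  set x1 := (β + (4*q - α)) % (4*q) with hx1def
  have hx1 : x1 < 4*q := Nat.mod_lt _ (by omega)
  have hz1 : (x1 + α) % (4*q) = β := by
    rw [hx1def, Nat.mod_add_mod, show β + (4*q - α) + α = β + 4*q by omega,
      Nat.add_mod_right, Nat.mod_eq_of_lt hβ]
  have h1 := h x1 hx1
  rw [hz1, Nat.xor_self, Nat.zero_add, Nat.mod_eq_of_lt hγ] at h1
  -- second instantiation
  have hβm : β < 2^m := by omega
  have hqm : q < 2^m := by omega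
  have hβq : β ^^^ q < 4*q := by
    have := Nat.xor_lt_two_pow hβm hqm
    omega
  set xq := ((β ^^^ q) + (4*q - α)) % (4*q) with hxqdef
  have hxq : xq < 4*q := Nat.mod_lt _ (by omega)
  have hzq : (xq + α) % (4*q) = β ^^^ q := by
    rw [hxqdef, Nat.mod_add_mod, show (β ^^^ q) + (4*q - α) + α = (β ^^^ q) + 4*q by omega,
      Nat.add_mod_right, Nat.mod_eq_of_lt hβq]
  have h2 := h xq hxq
  rw [hzq, Nat.xor_comm β q, Nat.xor_assoc, Nat.xor_self, Nat.xor_zero, h1] at h2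
  -- h2 : (q + (x1 ^^^ y)) % (4*q) = xq ^^^ y
  -- decompositions
  have hld : x1 = x1 % q + (x1 / q) * q := (Nat.mod_add_div' x1 q).symm
  have hyd : y = y % q + (y / q) * q := (Nat.mod_add_div' y q).symm
  have hβd : β = β % q + (β / q) * q := (Nat.mod_add_div' β q).symm
  set l := x1 % q with hldef
  set xh := x1 / q with hxhdef
  set yl := y % q with hyldef
  set e := y / q with hedef
  set bl := β % q with hbldef
  set bh := β / q with hbhdef
  have hlq : l < q := Nat.mod_lt _ hq
  have hylq : yl < q := Nat.mod_lt _ hq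
  have hblq : bl < q := Nat.mod_lt _ hq
  have hxh4 : xh < 4 := by rw [hxhdef]; exact (Nat.div_lt_iff_lt_mul hq).2 (by omega)
  have he4 : e < 4 := by rw [hedef]; exact (Nat.div_lt_iff_lt_mul hq).2 (by omega)
  have hbh4 : bh < 4 := by rw [hbhdef]; exact (Nat.div_lt_iff_lt_mul hq).2 (by omega)
  -- β ^^^ q split
  have hbq : β ^^^ q = bl + (bh ^^^ 1) * q := by
    have h5 := xor_split hqdef bh 1 hblq hq
    rw [Nat.xor_zero, Nat.zero_add, Nat.one_mul, ← hβd] at h5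
    exact h5
  have hxy : x1 ^^^ y = (l ^^^ yl) + (xh ^^^ e) * q := by
    conv_lhs => rw [hld, hyd]
    exact xor_split hqdef xh e hlq hylq
  have hxyl : l ^^^ yl < q := by rw [hqdef] at hlq hylq ⊢; exact Nat.xor_lt_two_pow hlq hylq
  -- LHS of h2
  have hLHS : (q + (x1 ^^^ y)) % (4*q) = (l ^^^ yl) + (((xh ^^^ e) + 1) % 4) * q := by
    rw [hxy, show q + ((l ^^^ yl) + (xh ^^^ e) * q) = (l ^^^ yl) + ((xh ^^^ e) + 1) * q by ring]
    exact mod_split hq hxyl _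
  rcases Nat.mod_two_eq_zero_or_one bh with hpar | hpar
  · -- bh even : β ^^^ q = β + q
    have hx : bh ^^^ 1 = bh + 1 := by interval_cases bh <;> first | decide | omega
    have hβq' : β ^^^ q = β + q := by
      rw [hbq, hx]; conv_rhs => rw [hβd]
      ring
    have hxq1 : xq = (x1 + q) % (4*q) := by
      rw [hxqdef, hx1def, Nat.mod_add_mod, hβq']
      congr 1
      omega
    have hRHS : xq ^^^ y = (l ^^^ yl) + (((xh + 1) % 4) ^^^ e) * q := by
      rw [hxq1]
      conv_lhs => rw [hld, hyd, show (l + xh * q + q) % (4*q) = (l + (xh+1) * q) % (4*q) by ring_nf]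
      rw [mod_split hq hlq]
      exact xor_split hqdef _ e hlq hylq
    rw [hLHS, hRHS] at h2
    have key : ((xh ^^^ e) + 1) % 4 = ((xh + 1) % 4) ^^^ e := by
      have := Nat.add_left_cancel h2
      exact Nat.eq_of_mul_eq_mul_right hq this
    interval_cases xh <;> interval_cases e <;> first | exact absurd key (by decide) | omega
  · -- bh odd : (β ^^^ q) + q = β
    have hx : (bh ^^^ 1) + 1 = bh := by interval_cases bh <;> first | decide | omega
    have hβq' : (β ^^^ q) + q = β := by
      rw [hbq]; conv_rhs => rw [hβd]
      set B := bh ^^^ 1 with hBdef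
      rw [← hx]; ring
    have hxq1 : xq = (x1 + 3*q) % (4*q) := by
      rw [hxqdef, hx1def, Nat.mod_add_mod]
      rw [show β + (4*q - α) + 3*q = ((β ^^^ q) + (4*q - α)) + 4*q by omega]
      rw [Nat.add_mod_right]
    have hRHS : xq ^^^ y = (l ^^^ yl) + (((xh + 3) % 4) ^^^ e) * q := by
      rw [hxq1]
      conv_lhs => rw [hld, hyd, show (l + xh * q + 3*q) % (4*q) = (l + (xh+3) * q) % (4*q) by ring_nf]
      rw [mod_split hq hlq]
      exact xor_split hqdef _ e hlq hylq
    rw [hLHS, hRHS] at h2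
    have key : ((xh ^^^ e) + 1) % 4 = ((xh + 3) % 4) ^^^ e := by
      have := Nat.add_left_cancel h2
      exact Nat.eq_of_mul_eq_mul_right hq this
    interval_cases xh <;> interval_cases e <;> first | exact absurd key (by decide) | omega

theorem stmt_3 (n : ℕ) (hn : 1 ≤ n) (α β γ y : ℕ)
    (hα : α < 2^n) (hβ : β < 2^n) (hγ : γ < 2^n) (hy : y < 2^n)
    (h : ∀ x : ℕ, x < 2^n → ((((x + α) % 2^n) ^^^ β) + γ) % 2^n = x ^^^ y) :
    y % 2^(n-1) = β % 2^(n-1) := by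
  apply Nat.eq_of_testBit_eq
  intro i
  simp only [Nat.testBit_mod_two_pow]
  rcases Nat.lt_or_ge i (n-1) with hi | hi
  · have hm : i + 2 ≤ n := by omega
    have ht := trunc n (i+2) hm α β γ y h
    have hc := crux (i+2) (by omega) (α % 2^(i+2)) (β % 2^(i+2)) (γ % 2^(i+2)) (y % 2^(i+2))
      (Nat.mod_lt _ (Nat.two_pow_pos _)) (Nat.mod_lt _ (Nat.two_pow_pos _))
      (Nat.mod_lt _ (Nat.two_pow_pos _)) (Nat.mod_lt _ (Nat.two_pow_pos _)) ht
    simp only [Nat.add_sub_cancel] at hc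
    have h1 : y.testBit i = (y % 2^(i+2)).testBit i := by
      rw [Nat.testBit_mod_two_pow, decide_eq_true (by omega : i < i + 2), Bool.true_and]
    have h2 : β.testBit i = (β % 2^(i+2)).testBit i := by
      rw [Nat.testBit_mod_two_pow, decide_eq_true (by omega : i < i + 2), Bool.true_and]
    rw [decide_eq_true hi, Bool.true_and, Bool.true_and, h1, h2,
      Nat.testBit_eq_decide_div_mod_eq, Nat.testBit_eq_decide_div_mod_eq, hc]
  · have : ¬ i < n - 1 := by omega
    simp [this]
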